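/- arXiv:1508.02295 — 6 statements merged into one kernel-verified Lean document; each statement's English description precedes it below -/
import Mathlib

section
/- Let (P, L, I) be a finite partial linear space with no triangles, and let G be a collineation group of (P, L, I) with a normal subgroup M that acts regularly on P; identify P with M so that M acts on points by right multiplication. Let ℓ be a line incident with the identity 1 ∈ M whose setwise stabiliser M_ℓ in M is nontrivial. Then M_ℓ is contained in the point set of ℓ, and for every point h incident with ℓ the left coset hM_ℓ is contained in the point set of ℓ; thus ℓ is a union of left M_ℓ-cosets, including the trivial coset M_ℓ. -/
/-- In a finite triangle-free partial linear space with a normal point-regular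
subgroup `M` of a collineation group `G` (points identified with `M`), a line `l` through
`1` with nontrivial stabiliser `M_l` contains `M_l` and is a union of left `M_l`-cosets. -/
theorem stmt_1 {M L G : Type*} [Group M] [Fintype M] [Fintype L]
    [Group G] [MulAction G M] [MulAction G L]
    (I : M → L → Prop)
    -- any two distinct points are incident with at most one common line
    (hpls : ∀ p q : M, p ≠ q → ∀ l l' : L, I p l → I q l → I p l' → I q l' → l = l')
    -- no triangles
    (htri : ∀ p q r : M, ∀ l₁ l₂ l₃ : L, p ≠ q → q ≠ r → p ≠ r →
      l₁ ≠ l₂ → l₂ ≠ l₃ → l₁ ≠ l₃ →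
      I p l₁ → I q l₁ → I q l₂ → I r l₂ → I p l₃ → I r l₃ → False)
    -- G acts by collineations
    (hcol : ∀ (g : G) (p : M) (l : L), I p l ↔ I (g • p) (g • l))
    -- M is (the image of) a normal subgroup of G acting on points by right multiplication
    (ρ : M →* G) (hρ : ∀ m x : M, (ρ m) • x = x * m)
    (hnorm : ρ.range.Normal)
    (l : L) (h1 : I (1 : M) l)
    -- the stabiliser M_l of l in M is nontrivial
    (hstab : (MulAction.stabilizer G l).comap ρ ≠ ⊥) :
    (((MulAction.stabilizer G l).comap ρ : Set M) ⊆ {x : M | I x l}) ∧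
      (∀ h : M, I h l → ∀ m ∈ (MulAction.stabilizer G l).comap ρ, I (h * m) l) := by
  have key : ∀ h : M, I h l → ∀ m ∈ (MulAction.stabilizer G l).comap ρ, I (h * m) l := by
    intro h hh m hm
    have hm' : (ρ m) • l = l := hm
    have := (hcol (ρ m) h l).mp hh
    rwa [hρ, hm'] at this
  refine ⟨?_, key⟩
  intro m hm
  simpa using key 1 h1 m hm
end

section
/- Let (P, L, I) be a finite partial linear space with no triangles, and let G be a collineation group of (P, L, I) with a normal subgroup M that acts regularly on P; identify P with M so that M acts on points by right multiplication. Suppose in addition that M ⋊ Inn(M) ≤ G, i.e., for every g ∈ M the left translation x ↦ g⁻¹x of P = M is induced by an element of G. Let ℓ be a line incident with the identity 1 ∈ M whose setwise stabiliser M_ℓ in M is nontrivial. Then the point set of ℓ equals M_ℓ; in particular, the point set of ℓ is a subgroup of M. -/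
/-- As in Statement 1, but assuming additionally that all left translations
are induced by `G` (i.e. `M ⋊ Inn(M) ≤ G`): then the point set of the line `l` through `1`
equals its stabiliser `M_l`; in particular it is a subgroup of `M`. -/
theorem stmt_2 {M L G : Type*} [Group M] [Fintype M] [Fintype L]
    [Group G] [MulAction G M] [MulAction G L]
    (I : M → L → Prop)
    -- any two distinct points are incident with at most one common line
    (hpls : ∀ p q : M, p ≠ q → ∀ l l' : L, I p l → I q l → I p l' → I q l' → l = l')
    -- no triangles
    (htri : ∀ p q r : M, ∀ l₁ l₂ l₃ : L, p ≠ q → q ≠ r → p ≠ r →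
      l₁ ≠ l₂ → l₂ ≠ l₃ → l₁ ≠ l₃ →
      I p l₁ → I q l₁ → I q l₂ → I r l₂ → I p l₃ → I r l₃ → False)
    -- G acts by collineations
    (hcol : ∀ (g : G) (p : M) (l : L), I p l ↔ I (g • p) (g • l))
    -- M is (the image of) a normal subgroup of G acting on points by right multiplication
    (ρ : M →* G) (hρ : ∀ m x : M, (ρ m) • x = x * m)
    (hnorm : ρ.range.Normal)
    -- every left translation of M is induced by an element of G
    (hleft : ∀ m : M, ∃ g : G, ∀ x : M, g • x = m⁻¹ * x)
    (l : L) (h1 : I (1 : M) l)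
    -- the stabiliser M_l of l in M is nontrivial
    (hstab : (MulAction.stabilizer G l).comap ρ ≠ ⊥) :
    {x : M | I x l} = (((MulAction.stabilizer G l).comap ρ : Subgroup M) : Set M) := by
  obtain ⟨⟨s, hsS⟩, hs1⟩ := Subgroup.ne_bot_iff_exists_ne_one.mp hstab
  have hs1' : s ≠ 1 := by
    simpa [Subgroup.mk_eq_one] using hs1
  have hsl : (ρ s) • l = l := hsS
  -- the point set of l is closed under right multiplication by s
  have hD_s : ∀ x : M, I x l → I (x * s) l := by
    intro x hx
    have := (hcol (ρ s) x l).mp hx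
    rwa [hρ, hsl] at this
  have hIs : I s l := by
    have := hD_s 1 h1
    rwa [one_mul] at this
  -- closure: x, y on l implies x⁻¹ * y on l
  have hclosed : ∀ x y : M, I x l → I y l → I (x⁻¹ * y) l := by
    intro x y hx hy
    obtain ⟨g, hg⟩ := hleft x
    have h1' : I (1 : M) (g • l) := by
      have := (hcol g x l).mp hx
      rwa [hg, inv_mul_cancel] at this
    have hs' : I s (g • l) := by
      have := (hcol g (x * s) l).mp (hD_s x hx)
      rwa [hg, inv_mul_cancel_left] at this
    have hgl : g • l = l :=
      hpls 1 s (Ne.symm hs1') (g • l) l h1' hs' h1 hIs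
    have := (hcol g y l).mp hy
    rwa [hg, hgl] at this
  have hinv : ∀ x : M, I x l → I x⁻¹ l := by
    intro x hx
    have := hclosed x 1 hx h1
    rwa [mul_one] at this
  ext x
  constructor
  · intro hx
    simp only [Set.mem_setOf_eq] at hx
    have hxinv : I x⁻¹ l := hinv x hx
    have h1' : I (1 : M) ((ρ x) • l) := by
      have := (hcol (ρ x) x⁻¹ l).mp hxinv
      rwa [hρ, inv_mul_cancel] at this
    have hsx : I (s * x⁻¹) l := by
      have := hclosed s⁻¹ x⁻¹ (hinv s hIs) hxinv
      rwa [inv_inv] at this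
    have hs' : I s ((ρ x) • l) := by
      have := (hcol (ρ x) (s * x⁻¹) l).mp hsx
      rwa [hρ, mul_assoc, inv_mul_cancel, mul_one] at this
    have : l = (ρ x) • l :=
      hpls 1 s (Ne.symm hs1') l ((ρ x) • l) h1 hIs h1' hs'
    exact Subgroup.mem_comap.mpr (MulAction.mem_stabilizer_iff.mpr this.symm)
  · intro hx
    have hxl : (ρ x) • l = l := Subgroup.mem_comap.mp hx
    have := (hcol (ρ x) 1 l).mp h1
    rw [hρ, one_mul, hxl] at this
    exact this
end

section
/- Let (P, L, I) be a finite partial linear space with no triangles, and let G be a collineation group of (P, L, I) that acts transitively on L and has a normal subgroup M acting regularly on P with M ⋊ Inn(M) ≤ G; identify P with M. Suppose the action of M on L is not semiregular, i.e., some line has nontrivial setwise stabiliser in M. Then every line incident with the identity 1 ∈ M has point set equal to a subgroup of M, and for any two lines ℓ and ℓ' incident with 1 there exists an element g of the point stabiliser G₁ of 1 in G whose induced automorphism of M maps the subgroup ℓ onto the subgroup ℓ'; that is, the lines incident with 1 form a single G₁-conjugacy class of subgroups of M. -/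
/-- In a finite triangle-free partial linear space with a line-transitive
collineation group `G` having a normal point-regular subgroup `M` with `M ⋊ Inn(M) ≤ G`,
if `M` is not semiregular on lines then every line through `1` is a subgroup of `M`, and
the lines through `1` form a single `G₁`-conjugacy class of subgroups of `M`. -/
theorem stmt_3 {M L G : Type*} [Group M] [Fintype M] [Fintype L]
    [Group G] [MulAction G M] [MulAction G L]
    (I : M → L → Prop)
    -- any two distinct points are incident with at most one common line
    (hpls : ∀ p q : M, p ≠ q → ∀ l l' : L, I p l → I q l → I p l' → I q l' → l = l')
    -- no triangles
    (htri : ∀ p q r : M, ∀ l₁ l₂ l₃ : L, p ≠ q → q ≠ r → p ≠ r →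
      l₁ ≠ l₂ → l₂ ≠ l₃ → l₁ ≠ l₃ →
      I p l₁ → I q l₁ → I q l₂ → I r l₂ → I p l₃ → I r l₃ → False)
    -- G acts by collineations
    (hcol : ∀ (g : G) (p : M) (l : L), I p l ↔ I (g • p) (g • l))
    -- G is transitive on lines
    (htL : ∀ l l' : L, ∃ g : G, g • l = l')
    -- M is (the image of) a normal subgroup of G acting on points by right multiplication
    (ρ : M →* G) (hρ : ∀ m x : M, (ρ m) • x = x * m)
    (hnorm : ρ.range.Normal)
    -- every left translation of M is induced by an element of G
    (hleft : ∀ m : M, ∃ g : G, ∀ x : M, g • x = m⁻¹ * x)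
    -- the action of M on lines is not semiregular
    (hnotsemi : ∃ (l₀ : L) (m : M), m ≠ 1 ∧ (ρ m) • l₀ = l₀) :
    (∀ l : L, I (1 : M) l → ∃ H : Subgroup M, {x : M | I x l} = (H : Set M)) ∧
      (∀ l l' : L, I (1 : M) l → I (1 : M) l' →
        ∃ g : G, g • (1 : M) = 1 ∧
          (∀ x y : M, g • (x * y) = (g • x) * (g • y)) ∧
          (fun x : M => g • x) '' {x : M | I x l} = {x : M | I x l'}) := by
  classical
  obtain ⟨l₀, m₀, hm₀ne, hm₀fix⟩ := hnotsemi
  -- ρ is injective (in the sense we need)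
  have hρinj : ∀ m : M, ρ m = 1 → m = 1 := by
    intro m h
    have h1 := hρ m 1
    rw [h, one_smul, one_mul] at h1
    exact h1.symm
  -- every line has a nontrivial stabilising element of M
  have hstab : ∀ l : L, ∃ m : M, m ≠ 1 ∧ ρ m • l = l := by
    intro l
    obtain ⟨g, hg⟩ := htL l₀ l
    obtain ⟨m, hm⟩ := hnorm.conj_mem (ρ m₀) ⟨m₀, rfl⟩ g
    refine ⟨m, ?_, ?_⟩
    · intro h
      apply hm₀ne
      apply hρinj
      have h2 : ρ m₀ = g⁻¹ * ρ m * g := by rw [hm]; group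
      rw [h, map_one, mul_one, inv_mul_cancel] at h2
      exact h2
    · rw [← hg, hm, smul_smul, inv_mul_cancel_right, mul_smul, hm₀fix]
  -- stabilising elements translate points of the line
  have hfixmem : ∀ (l : L) (m : M), ρ m • l = l → ∀ x, I x l → I (x * m) l := by
    intro l m hf x hx
    have := (hcol (ρ m) x l).mp hx
    rwa [hρ, hf] at this
  -- lines through 1 are closed under multiplication
  have hclosed : ∀ l : L, I 1 l → ∀ s t : M, I s l → I t l → I (s * t) l := by
    intro l h1 s t hs ht
    obtain ⟨m, hmne, hmf⟩ := hstab l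
    obtain ⟨g, hg⟩ := hleft s⁻¹
    have hg' : ∀ x : M, g • x = s * x := by intro x; rw [hg, inv_inv]
    have hsm : I (s * m) l := hfixmem l m hmf s hs
    have hm1 : I m l := by
      have := hfixmem l m hmf 1 h1; rwa [one_mul] at this
    have h1' : I s (g • l) := by
      have := (hcol g 1 l).mp h1; rwa [hg', mul_one] at this
    have h2' : I (s * m) (g • l) := by
      have := (hcol g m l).mp hm1; rwa [hg'] at this
    have hne : s ≠ s * m := fun hq => hmne (left_eq_mul.mp hq)
    have hgl : g • l = l := hpls s (s * m) hne _ _ h1' h2' hs hsm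
    have := (hcol g t l).mp ht
    rwa [hg', hgl] at this
  -- lines through 1 are closed under inversion
  have hinv : ∀ l : L, I 1 l → ∀ s : M, I s l → I s⁻¹ l := by
    intro l h1 s hs
    have hpow : ∀ n : ℕ, I (s ^ n) l := by
      intro n
      induction n with
      | zero => simpa using h1
      | succ k ih => rw [pow_succ]; exact hclosed l h1 _ _ ih hs
    have key : s ^ (orderOf s - 1) * s = 1 := by
      rw [← pow_succ, Nat.sub_add_cancel (orderOf_pos s), pow_orderOf_eq_one]
    have h2 : s ^ (orderOf s - 1) = s⁻¹ := eq_inv_of_mul_eq_one_left key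
    rw [← h2]
    exact hpow _
  constructor
  · intro l h1
    exact ⟨{ carrier := {x : M | I x l}
             one_mem' := h1
             mul_mem' := fun ha hb => hclosed l h1 _ _ ha hb
             inv_mem' := fun ha => hinv l h1 _ ha }, rfl⟩
  · intro l l' h1 h1'
    obtain ⟨g₀, hg₀⟩ := htL l l'
    obtain ⟨h, hh⟩ := hleft (g₀ • (1 : M))
    have hg1 : (h * g₀) • (1 : M) = 1 := by
      rw [mul_smul, hh, inv_mul_cancel]
    refine ⟨h * g₀, hg1, ?_, ?_⟩
    · -- the induced map is an automorphism
      intro x y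
      set g := h * g₀ with hgdef
      obtain ⟨my, hmy⟩ := hnorm.conj_mem (ρ y) ⟨y, rfl⟩ g
      have key : ∀ z : M, g • (z * y) = (g • z) * my := by
        intro z
        have e1 : z * y = ρ y • z := by rw [hρ]
        rw [e1, ← mul_smul]
        have e2 : g * ρ y = ρ my * g := by rw [hmy]; group
        rw [e2, mul_smul, hρ]
      have hy : g • y = my := by
        have := key 1
        rwa [one_mul, hg1, one_mul] at this
      rw [key x, hy]
    · -- the image of the point set of l is the point set of l'
      have hp : I (g₀ • (1 : M)) l' := by
        have := (hcol g₀ 1 l).mp h1; rwa [hg₀] at this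
      obtain ⟨m', hm'ne, hm'f⟩ := hstab l'
      have him' : I m' l' := by
        have := hfixmem l' m' hm'f 1 h1'; rwa [one_mul] at this
      have hpinv : I (g₀ • (1 : M))⁻¹ l' := hinv l' h1' _ hp
      have hpm : I ((g₀ • (1 : M))⁻¹ * m') l' := hclosed l' h1' _ _ hpinv him'
      have e1 : I (g₀ • (1 : M))⁻¹ (h • l') := by
        have := (hcol h 1 l').mp h1'; rwa [hh, mul_one] at this
      have e2 : I ((g₀ • (1 : M))⁻¹ * m') (h • l') := by
        have := (hcol h m' l').mp him'; rwa [hh] at this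
      have hne : (g₀ • (1 : M))⁻¹ ≠ (g₀ • (1 : M))⁻¹ * m' :=
        fun hq => hm'ne (left_eq_mul.mp hq)
      have hhl : h • l' = l' := hpls _ _ hne _ _ e1 e2 hpinv hpm
      have hgl : (h * g₀) • l = l' := by rw [mul_smul, hg₀, hhl]
      ext x
      simp only [Set.mem_image, Set.mem_setOf_eq]
      constructor
      · rintro ⟨a, ha, rfl⟩
        have := (hcol (h * g₀) a l).mp ha
        rwa [hgl] at this
      · intro hx
        refine ⟨(h * g₀)⁻¹ • x, ?_, smul_inv_smul _ _⟩
        have := (hcol (h * g₀) ((h * g₀)⁻¹ • x) l).mpr ?_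
        · exact this
        · rwa [smul_inv_smul, hgl]
end

section
/- Let (P, L, I) be a finite partial linear space with no triangles, and let G be a collineation group of (P, L, I) that acts transitively on L and has a normal subgroup M acting regularly on P with M ⋊ Inn(M) ≤ G. Suppose the action of M on L is not semiregular, i.e., some line has nontrivial setwise stabiliser in M. Then G acts transitively on the flags of (P, L, I), that is, on the set of incident point–line pairs. -/
/-- In a finite triangle-free partial linear space with a line-transitive
collineation group `G` having a normal point-regular subgroup `M` with `M ⋊ Inn(M) ≤ G`,
if `M` is not semiregular on lines then `G` is transitive on flags. -/
theorem stmt_4 {M L G : Type*} [Group M] [Fintype M] [Fintype L]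
    [Group G] [MulAction G M] [MulAction G L]
    (I : M → L → Prop)
    -- any two distinct points are incident with at most one common line
    (hpls : ∀ p q : M, p ≠ q → ∀ l l' : L, I p l → I q l → I p l' → I q l' → l = l')
    -- no triangles
    (htri : ∀ p q r : M, ∀ l₁ l₂ l₃ : L, p ≠ q → q ≠ r → p ≠ r →
      l₁ ≠ l₂ → l₂ ≠ l₃ → l₁ ≠ l₃ →
      I p l₁ → I q l₁ → I q l₂ → I r l₂ → I p l₃ → I r l₃ → False)
    -- G acts by collineations
    (hcol : ∀ (g : G) (p : M) (l : L), I p l ↔ I (g • p) (g • l))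
    -- G is transitive on lines
    (htL : ∀ l l' : L, ∃ g : G, g • l = l')
    -- M is (the image of) a normal subgroup of G acting on points by right multiplication
    (ρ : M →* G) (hρ : ∀ m x : M, (ρ m) • x = x * m)
    (hnorm : ρ.range.Normal)
    -- every left translation of M is induced by an element of G
    (hleft : ∀ m : M, ∃ g : G, ∀ x : M, g • x = m⁻¹ * x)
    -- the action of M on lines is not semiregular
    (hnotsemi : ∃ (l₀ : L) (m : M), m ≠ 1 ∧ (ρ m) • l₀ = l₀) :
    ∀ (p : M) (l : L), I p l → ∀ (p' : M) (l' : L), I p' l' →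
      ∃ g : G, g • p = p' ∧ g • l = l' := by
  intro p l hpl p' l' hp'l'
  obtain ⟨g₀, hg₀⟩ := htL l l'
  set q : M := g₀ • p with hq
  have hql' : I q l' := by
    rw [hq, ← hg₀]; exact (hcol g₀ p l).1 hpl
  obtain ⟨lq, hlq⟩ := hleft q
  set l'' : L := lq • l' with hl''
  have h1 : I (1 : M) l'' := by
    have := (hcol lq q l').1 hql'
    rwa [hlq, inv_mul_cancel] at this
  have hp'' : I (q⁻¹ * p') l'' := by
    have := (hcol lq p' l').1 hp'l'
    rwa [hlq] at this
  -- a nontrivial element of M stabilizing l''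
  obtain ⟨l₀, m₀, hm₀, hm₀l⟩ := hnotsemi
  obtain ⟨g₁, hg₁⟩ := htL l₀ l''
  have hρinj : ∀ m : M, ρ m = 1 → m = 1 := by
    intro m hm
    have h := hρ m 1
    rwa [hm, one_smul, one_mul, eq_comm] at h
  obtain ⟨m, hm⟩ := hnorm.conj_mem (ρ m₀) ⟨m₀, rfl⟩ g₁
  have hmne : m ≠ 1 := by
    intro h
    apply hm₀
    apply hρinj
    rw [h, map_one] at hm
    have : ρ m₀ = 1 := by
      have := hm.symm
      calc ρ m₀ = g₁⁻¹ * (g₁ * ρ m₀ * g₁⁻¹) * g₁ := by group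
        _ = g₁⁻¹ * 1 * g₁ := by rw [← hm]
        _ = 1 := by group
    exact this
  have hmfix : (ρ m) • l'' = l'' := by
    rw [hm, mul_smul, mul_smul, ← hg₁, inv_smul_smul, hm₀l, hg₁]
  -- points stay on l'' under right multiplication by a stabilizing element
  have hmem : ∀ (z k : M), I z l'' → (ρ k) • l'' = l'' → I (z * k) l'' := by
    intro z k hz hk
    have := (hcol (ρ k) z l'').1 hz
    rwa [hρ, hk] at this
  -- key claim: every point on l'' stabilizes l''
  have hkey : ∀ x : M, I x l'' → (ρ x) • l'' = l'' := by
    intro x hx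
    rcases eq_or_ne x 1 with rfl | hxne
    · rw [map_one, one_smul]
    · -- conjugation by x fixes l''
      obtain ⟨lx, hlx⟩ := hleft x
      set κ : G := ρ x * lx with hκ
      have hκsmul : ∀ z : M, κ • z = x⁻¹ * z * x := by
        intro z
        rw [hκ, mul_smul, hlx, hρ]
      have hκl : κ • l'' = l'' := by
        have h1' : I (1 : M) (κ • l'') := by
          have := (hcol κ 1 l'').1 h1
          rwa [hκsmul, mul_one, inv_mul_cancel] at this
        have hx' : I x (κ • l'') := by
          have := (hcol κ x l'').1 hx
          rw [hκsmul] at this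
          rwa [show x⁻¹ * x * x = x by group] at this
        exact (hpls 1 x (Ne.symm hxne) l'' (κ • l'') h1 hx h1' hx').symm
      have hmS : I m l'' := by
        have := hmem 1 m h1 hmfix
        rwa [one_mul] at this
      have hxm : I (x * m) l'' := hmem x m hx hmfix
      have hmx : I (m * x) l'' := by
        have := (hcol κ (x * m) l'').1 hxm
        rw [hκl, hκsmul] at this
        rwa [show x⁻¹ * (x * m) * x = m * x by group] at this
      -- now ρ x • l'' and l'' share the two distinct points x and m*x
      have hx2 : I x ((ρ x) • l'') := by
        have := (hcol (ρ x) 1 l'').1 h1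
        rwa [hρ, one_mul] at this
      have hmx2 : I (m * x) ((ρ x) • l'') := by
        have := (hcol (ρ x) m l'').1 hmS
        rwa [hρ] at this
      have hne : x ≠ m * x := by
        intro h
        apply hmne
        have h' : m * x = 1 * x := by rw [← h, one_mul]
        exact mul_right_cancel h'
      exact (hpls x (m * x) hne l'' ((ρ x) • l'') hx hmx hx2 hmx2).symm
  -- assemble the final collineation
  have hfix : (ρ (q⁻¹ * p')) • l'' = l'' := hkey _ hp''
  refine ⟨lq⁻¹ * ρ (q⁻¹ * p') * lq * g₀, ?_, ?_⟩
  · have hlqinv : ∀ w : M, lq⁻¹ • w = q * w := by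
      intro w
      have : lq • (q * w) = w := by rw [hlq]; group
      conv_lhs => rw [← this]
      rw [inv_smul_smul]
    rw [mul_smul, mul_smul, mul_smul, ← hq, hlq, inv_mul_cancel, hρ, one_mul, hlqinv,
      mul_inv_cancel_left]
  · rw [mul_smul, mul_smul, mul_smul, hg₀, ← hl'', hfix, hl'', inv_smul_smul]
end

section
/- Let (P, L, I) be a finite thick generalised quadrangle of order (s,t), and let G be a collineation group of (P, L, I) that acts transitively on L and has a normal subgroup M acting regularly on P with M ⋊ Inn(M) ≤ G; identify P with M. Suppose M is the internal direct product of subgroups T₁, …, T_k with k ≥ 3, where the T_i are pairwise isomorphic non-Abelian finite simple groups, and suppose the conjugation action of G on M permutes the set {T₁, …, T_k} transitively. Let ℓ be a line incident with the identity 1 ∈ M, identified with its point set, which is a subgroup of M. Then M admits no internal direct product decomposition M = A × B (A, B normal subgroups of M with A ∩ B = {1} and AB = M) such that ℓ ∩ A ≠ {1} and ℓ ∩ B ≠ {1}. -/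
private lemma aux_Ti_le {M : Type*} [Group M]
    (Ti : Subgroup M) (hTin : Ti.Normal) (hTis : IsSimpleGroup Ti)
    (N : Subgroup M) (hN : N.Normal) (x : M) (hx : x ∈ N)
    (t : M) (ht : t ∈ Ti) (hnc : x * t ≠ t * x) : Ti ≤ N := by
  have hKn : (N ⊓ Ti).Normal :=
    ⟨fun n hn g => ⟨hN.conj_mem n (Subgroup.mem_inf.mp hn).1 g,
      hTin.conj_mem n (Subgroup.mem_inf.mp hn).2 g⟩⟩
  rcases hTis.eq_bot_or_eq_top_of_normal ((N ⊓ Ti).subgroupOf Ti) (hKn.subgroupOf Ti)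
      with hbot | htop
  · exfalso
    have hdisj : Disjoint (N ⊓ Ti) Ti := Subgroup.subgroupOf_eq_bot.mp hbot
    have hKbot : N ⊓ Ti = ⊥ := hdisj.eq_bot_of_le inf_le_right
    set c := x⁻¹ * (t⁻¹ * x * t) with hc
    have hcN : c ∈ N := N.mul_mem (N.inv_mem hx) (by simpa using hN.conj_mem x hx t⁻¹)
    have hcT : c ∈ Ti := by
      have h1 : x⁻¹ * t⁻¹ * x ∈ Ti := by simpa using hTin.conj_mem t⁻¹ (Ti.inv_mem ht) x⁻¹
      have h2 : c = (x⁻¹ * t⁻¹ * x) * t := by rw [hc]; group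
      rw [h2]; exact Ti.mul_mem h1 ht
    have hc1 : c ≠ 1 := by
      intro h
      apply hnc
      have h' : x⁻¹ * (t⁻¹ * x * t) = 1 := by rw [← hc]; exact h
      have h2 : t⁻¹ * (x * t) = x := by
        have h3 := congrArg (fun y => x * y) h'
        simpa [mul_assoc] using h3
      have h4 := congrArg (fun y => t * y) h2
      simpa [mul_assoc] using h4
    have hmem : c ∈ (⊥ : Subgroup M) := hKbot ▸ (Subgroup.mem_inf.mpr ⟨hcN, hcT⟩)
    exact hc1 (Subgroup.mem_bot.mp hmem)
  · exact (Subgroup.subgroupOf_eq_top.mp htop).trans inf_le_left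

private lemma aux_exists_noncomm {M : Type*} [Group M] {k : ℕ} (T : Fin k → Subgroup M)
    (hTnorm : ∀ i, (T i).Normal) (hTindep : iSupIndep T) (hTsup : ⨆ i, T i = ⊤)
    (hTsimple : ∀ i, IsSimpleGroup (T i)) (hTnab : ∀ i, ∃ a b : (T i), a * b ≠ b * a)
    (x : M) (hx : x ≠ 1) : ∃ i, ∃ t ∈ T i, x * t ≠ t * x := by
  classical
  by_contra hcon
  push_neg at hcon
  have hdisj : Pairwise (Function.onFun Disjoint T) := hTindep.pairwiseDisjoint
  have hcomm : Pairwise fun i j : Fin k => ∀ (a : (T i)) (b : (T j)),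
      Commute ((T i).subtype a) ((T j).subtype b) := by
    intro i j hij a b
    exact Subgroup.commute_of_normal_of_disjoint _ _ (hTnorm i) (hTnorm j) (hdisj hij) _ _ a.2 b.2
  set f := MonoidHom.noncommPiCoprod (fun i => (T i).subtype) hcomm with hf
  have hinj : Function.Injective f := by
    apply MonoidHom.injective_noncommPiCoprod_of_iSupIndep
    · simpa [Subgroup.range_subtype] using hTindep
    · exact fun i => Subtype.coe_injective
  have hsurj : Function.Surjective f := by
    have hrange : f.range = ⊤ := by
      rw [hf, MonoidHom.noncommPiCoprod_range]
      simpa [Subgroup.range_subtype] using hTsup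
    exact MonoidHom.range_eq_top.mp hrange
  obtain ⟨w, hw⟩ := hsurj x
  have hwi : ∀ i, w i = 1 := by
    intro i
    have hci : ∀ u : (T i), w i * u = u * w i := by
      intro u
      have h1 : f (w * Pi.mulSingle i u) = f (Pi.mulSingle i u * w) := by
        rw [map_mul, map_mul, hw, MonoidHom.noncommPiCoprod_mulSingle]
        exact hcon i u u.2
      have h2 := hinj h1
      have h3 := congrFun h2 i
      simpa using h3
    have hcen : w i ∈ Subgroup.center (T i) :=
      Subgroup.mem_center_iff.mpr (fun g => (hci g).symm)
    rcases (hTsimple i).eq_bot_or_eq_top_of_normal (Subgroup.center _) inferInstance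
        with hbot | htop
    · rw [hbot] at hcen; exact Subgroup.mem_bot.mp hcen
    · obtain ⟨a, b, hab⟩ := hTnab i
      exfalso
      apply hab
      have hb : b ∈ Subgroup.center (T i) := by rw [htop]; trivial
      exact Subgroup.mem_center_iff.mp hb a
  have hw1 : w = 1 := funext fun i => hwi i
  rw [hw1, map_one] at hw
  exact hx hw.symm

open scoped Pointwise in
private lemma aux_mem_sup {M : Type*} [Group M] (A B : Subgroup M) (hB : B.Normal)
    (g : M) (hg : g ∈ A ⊔ B) : ∃ a ∈ A, ∃ b ∈ B, a * b = g := by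
  haveI := hB
  have hset : ((A ⊔ B : Subgroup M) : Set M) = (A : Set M) * (B : Set M) :=
    Subgroup.mul_normal A B
  have hg' : g ∈ (A : Set M) * (B : Set M) := by rw [← hset]; exact hg
  obtain ⟨a, ha, b, hb, hab⟩ := hg'
  exact ⟨a, ha, b, hb, hab⟩



/-- Claim 4.1: In the HC setting with `k ≥ 3` factors, a line `l` through
`1` (whose point set is a subgroup of `M`) admits no splitting over a direct decomposition
`M = A × B` with `l ∩ A ≠ 1 ≠ l ∩ B`. -/
theorem stmt_12 {M L G : Type*} [Group M] [Fintype M] [Fintype L]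
    [Group G] [MulAction G M] [MulAction G L]
    (I : M → L → Prop) (s t : ℕ) (hs : 2 ≤ s) (ht : 2 ≤ t)
    -- any two distinct points are incident with at most one common line
    (hpls : ∀ p q : M, p ≠ q → ∀ l l' : L, I p l → I q l → I p l' → I q l' → l = l')
    -- every line is incident with exactly s+1 points
    (hline : ∀ l : L, {p : M | I p l}.ncard = s + 1)
    -- every point is incident with exactly t+1 lines
    (hpoint : ∀ p : M, {l : L | I p l}.ncard = t + 1)
    -- the generalised quadrangle axiom
    (hGQ : ∀ (p : M) (l : L), ¬ I p l →
      ∃! qm : M × L, I p qm.2 ∧ I qm.1 qm.2 ∧ I qm.1 l)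
    -- G acts by collineations
    (hcol : ∀ (g : G) (p : M) (l : L), I p l ↔ I (g • p) (g • l))
    -- G is transitive on lines
    (htL : ∀ l l' : L, ∃ g : G, g • l = l')
    -- M is (the image of) a normal subgroup of G acting on points by right multiplication
    (ρ : M →* G) (hρ : ∀ m x : M, (ρ m) • x = x * m)
    (hnorm : ρ.range.Normal)
    -- every left translation of M is induced by an element of G
    (hleft : ∀ m : M, ∃ g : G, ∀ x : M, g • x = m⁻¹ * x)
    -- M is the internal direct product of k ≥ 3 pairwise isomorphic
    -- non-Abelian finite simple subgroups T₁, ..., T_k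
    (k : ℕ) (hk : 3 ≤ k) (T : Fin k → Subgroup M)
    (hTnorm : ∀ i, (T i).Normal)
    (hTindep : iSupIndep T)
    (hTsup : ⨆ i, T i = ⊤)
    (hTsimple : ∀ i, IsSimpleGroup (T i))
    (hTnab : ∀ i, ∃ a b : (T i), a * b ≠ b * a)
    (hTiso : ∀ i j, Nonempty ((T i) ≃* (T j)))
    -- the conjugation action of G on M permutes {T₁, ..., T_k} ...
    (hperm : ∀ g : G, ∃ σ : M ≃* M, (∀ x : M, g * ρ x * g⁻¹ = ρ (σ x)) ∧
      ∀ i, ∃ j, (T i).map σ.toMonoidHom = T j)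
    -- ... transitively
    (htrans : ∀ i j, ∃ (g : G) (σ : M ≃* M), (∀ x : M, g * ρ x * g⁻¹ = ρ (σ x)) ∧
      (T i).map σ.toMonoidHom = T j)
    -- l is a line through 1 whose point set is a subgroup of M
    (l : L) (h1 : I (1 : M) l)
    (Hl : Subgroup M) (hHl : {x : M | I x l} = (Hl : Set M)) :
    ¬ ∃ A B : Subgroup M, A.Normal ∧ B.Normal ∧ A ⊓ B = ⊥ ∧ A ⊔ B = ⊤ ∧
      (∃ a : M, a ∈ A ∧ a ≠ 1 ∧ I a l) ∧ (∃ b : M, b ∈ B ∧ b ≠ 1 ∧ I b l) := by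
  rintro ⟨A, B, hAn, hBn, hABinf, hABsup, ⟨a, haA, ha1, hal⟩, ⟨b, hbB, hb1, hbl⟩⟩
  classical
  -- membership in the line subgroup
  have hmem : ∀ x : M, I x l ↔ x ∈ Hl := by
    intro x
    constructor
    · intro h
      have hx : x ∈ {y : M | I y l} := h
      rwa [hHl] at hx
    · intro h
      have hx : x ∈ (Hl : Set M) := h
      rw [← hHl] at hx
      exact hx
  -- conjugation collineations
  have hconj : ∀ m : M, ∃ h : G, ∀ x : M, h • x = m⁻¹ * x * m := by
    intro m
    obtain ⟨g₁, hg₁⟩ := hleft m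
    refine ⟨g₁ * ρ m, fun x => ?_⟩
    rw [mul_smul, hρ, hg₁, mul_assoc]
  -- elements of A and B commute
  have hABdisj : Disjoint A B := by rw [disjoint_iff]; exact hABinf
  have hABcomm : ∀ x ∈ A, ∀ y ∈ B, x * y = y * x := fun x hx y hy =>
    Subgroup.commute_of_normal_of_disjoint A B hAn hBn hABdisj x y hx hy
  -- conjugation by an element fixing a nontrivial point of l preserves l
  have step : ∀ m c : M, c ≠ 1 → I c l → m⁻¹ * c * m = c →
      ∀ x : M, I x l → I (m⁻¹ * x * m) l := by
    intro m c hc1 hcl hcm x hx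
    obtain ⟨h, hh⟩ := hconj m
    have h1' : I (1 : M) (h • l) := by
      have h0 := (hcol h 1 l).mp h1
      rwa [hh, mul_one, inv_mul_cancel] at h0
    have hc' : I c (h • l) := by
      have h0 := (hcol h c l).mp hcl
      rwa [hh, hcm] at h0
    have hll : h • l = l := hpls 1 c (Ne.symm hc1) _ _ h1' hc' h1 hcl
    have h0 := (hcol h x l).mp hx
    rwa [hh, hll] at h0
  -- the line subgroup is normal
  haveI hHlnormal : Hl.Normal := by
    constructor
    intro n hn g
    have hgm : g⁻¹ ∈ (A ⊔ B : Subgroup M) := by rw [hABsup]; trivial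
    obtain ⟨a', ha', b', hb', hab⟩ := aux_mem_sup A B hBn g⁻¹ hgm
    have fixb : a'⁻¹ * b * a' = b := by
      rw [mul_assoc, ← hABcomm a' ha' b hbB, ← mul_assoc, inv_mul_cancel, one_mul]
    have fixa : b'⁻¹ * a * b' = a := by
      rw [mul_assoc, hABcomm a haA b' hb', ← mul_assoc, inv_mul_cancel, one_mul]
    have e1 : I (a'⁻¹ * n * a') l := step a' b hb1 hbl fixb n ((hmem n).mpr hn)
    have e2 : I (b'⁻¹ * (a'⁻¹ * n * a') * b') l := step b' a ha1 hal fixa _ e1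
    have hg : g = b'⁻¹ * a'⁻¹ := by rw [← mul_inv_rev, hab, inv_inv]
    have key : b'⁻¹ * (a'⁻¹ * n * a') * b' = g * n * g⁻¹ := by rw [hg]; group
    rw [← key]
    exact (hmem _).mp e2
  -- every line through 1 is (the point set of) a normal subgroup
  have lineSub : ∀ l' : L, I (1 : M) l' →
      ∃ N : Subgroup M, N.Normal ∧ ∀ x : M, I x l' ↔ x ∈ N := by
    intro l' h1'
    obtain ⟨g, hg⟩ := htL l l'
    obtain ⟨σ, hσ, -⟩ := hperm g
    have hact : ∀ x : M, g • x = (g • (1 : M)) * σ x := by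
      intro x
      have h0 : g • x = g • (ρ x • (1 : M)) := by rw [hρ, one_mul]
      rw [h0, ← mul_smul]
      have h2 : g * ρ x = ρ (σ x) * g := by
        rw [← hσ x]; group
      rw [h2, mul_smul, hρ]
    set c := g • (1 : M) with hc
    have hiff : ∀ z : M, I z l' ↔ σ.symm (c⁻¹ * z) ∈ Hl := by
      intro z
      have hz : g • (σ.symm (c⁻¹ * z)) = z := by
        rw [hact, MulEquiv.apply_symm_apply, mul_inv_cancel_left]
      have h0 := hcol g (σ.symm (c⁻¹ * z)) l
      rw [hz, hg] at h0
      constructor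
      · intro h; exact (hmem _).mp (h0.mpr h)
      · intro h; exact h0.mp ((hmem _).mpr h)
    refine ⟨Hl.map σ.toMonoidHom, hHlnormal.map σ.toMonoidHom σ.surjective, ?_⟩
    have hcN : c⁻¹ ∈ Hl.map σ.toMonoidHom := by
      have h0 := (hiff 1).mp h1'
      rw [mul_one] at h0
      exact ⟨σ.symm c⁻¹, h0, by simp⟩
    intro x
    rw [hiff x]
    constructor
    · intro h
      have hx' : c⁻¹ * x ∈ Hl.map σ.toMonoidHom := ⟨σ.symm (c⁻¹ * x), h, by simp⟩
      have h2 := mul_mem (inv_mem hcN) hx'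
      rwa [inv_mul_cancel_left] at h2
    · intro h
      have hx' : c⁻¹ * x ∈ Hl.map σ.toMonoidHom := mul_mem hcN h
      obtain ⟨y, hy, hyx⟩ := hx'
      have h2 : σ.symm (c⁻¹ * x) = y := by rw [← hyx]; simp
      rwa [h2]
  -- every line has a nontrivial point
  have pt : ∀ l' : L, ∃ x : M, I x l' ∧ x ≠ 1 := by
    intro l'
    have h2 : 1 < {p : M | I p l'}.ncard := by rw [hline l']; omega
    exact Set.exists_ne_of_one_lt_ncard h2 1
  -- three distinct lines through 1
  have h3 : 2 < {l' : L | I (1 : M) l'}.ncard := by rw [hpoint 1]; omega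
  obtain ⟨l₁, hl₁, l₂, hl₂, l₃, hl₃, h12, h13, h23⟩ := (Set.two_lt_ncard (Set.toFinite _)).mp h3
  obtain ⟨N₁, hN₁n, hN₁⟩ := lineSub l₁ hl₁
  obtain ⟨N₂, hN₂n, hN₂⟩ := lineSub l₂ hl₂
  obtain ⟨N₃, hN₃n, hN₃⟩ := lineSub l₃ hl₃
  have lineEq : ∀ (la lb : L) (x : M), x ≠ 1 → I x la → I x lb → I (1 : M) la →
      I (1 : M) lb → la = lb :=
    fun la lb x hx hxa hxb h1a h1b => hpls x 1 hx la lb hxa h1a hxb h1b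
  -- nontrivial element of each T i
  have Tnontriv : ∀ i : Fin k, ∃ u : M, u ∈ T i ∧ u ≠ 1 := by
    intro i
    obtain ⟨a', b', hab'⟩ := hTnab i
    refine ⟨(a' : M), a'.2, fun h => ?_⟩
    have ha'1 : a' = 1 := Subtype.ext h
    rw [ha'1, one_mul, mul_one] at hab'
    exact hab' rfl
  -- commuting cancellation lemma
  have lem : ∀ x y z u : M, x * u = u * x → z * u = u * z →
      (x * y * z) * u = u * (x * y * z) → y * u = u * y := by
    intro x y z u hx hz h
    have cx : Commute x u := hx
    have cz : Commute z u := hz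
    have ch : Commute (x * y * z) u := h
    have h1 : Commute (x⁻¹ * (x * y * z) * z⁻¹) u := (cx.inv_left.mul_left ch).mul_left cz.inv_left
    have h2 : x⁻¹ * (x * y * z) * z⁻¹ = y := by group
    rw [h2] at h1
    exact h1
  -- pick nontrivial points on l₂ and l₃
  obtain ⟨v, hvl₂, hv1⟩ := pt l₂
  obtain ⟨w, hwl₃, hw1⟩ := pt l₃
  have hvN₂ : v ∈ N₂ := (hN₂ v).mp hvl₂
  have hwN₃ : w ∈ N₃ := (hN₃ w).mp hwl₃
  obtain ⟨i, ti, hti, hvti⟩ :=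
    aux_exists_noncomm T hTnorm hTindep hTsup hTsimple hTnab v hv1
  obtain ⟨j, tj, htj, hwtj⟩ :=
    aux_exists_noncomm T hTnorm hTindep hTsup hTsimple hTnab w hw1
  have hTiN₂ : T i ≤ N₂ := aux_Ti_le (T i) (hTnorm i) (hTsimple i) N₂ hN₂n v hvN₂ ti hti hvti
  have hTjN₃ : T j ≤ N₃ := aux_Ti_le (T j) (hTnorm j) (hTsimple j) N₃ hN₃n w hwN₃ tj htj hwtj
  obtain ⟨ui, huiTi, hui1⟩ := Tnontriv i
  obtain ⟨uj, hujTj, huj1⟩ := Tnontriv j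
  have keyi : ∀ (l' : L) (N' : Subgroup M), I (1 : M) l' → (∀ x, I x l' ↔ x ∈ N') →
      T i ≤ N' → l' = l₂ := fun l' N' h1l' hN' hle =>
    lineEq l' l₂ ui hui1 ((hN' ui).mpr (hle huiTi)) ((hN₂ ui).mpr (hTiN₂ huiTi)) h1l' hl₂
  have keyj : ∀ (l' : L) (N' : Subgroup M), I (1 : M) l' → (∀ x, I x l' ↔ x ∈ N') →
      T j ≤ N' → l' = l₃ := fun l' N' h1l' hN' hle =>
    lineEq l' l₃ uj huj1 ((hN' uj).mpr (hle hujTj)) ((hN₃ uj).mpr (hTjN₃ hujTj)) h1l' hl₃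
  -- w centralises T i, v centralises T j
  have hwTi : ∀ u ∈ T i, w * u = u * w := by
    intro u hu
    by_contra hne
    have hle : T i ≤ N₃ := aux_Ti_le (T i) (hTnorm i) (hTsimple i) N₃ hN₃n w hwN₃ u hu hne
    exact h23 (keyi l₃ N₃ hl₃ hN₃ hle).symm
  have hvTj : ∀ u ∈ T j, v * u = u * v := by
    intro u hu
    by_contra hne
    have hle : T j ≤ N₂ := aux_Ti_le (T j) (hTnorm j) (hTsimple j) N₂ hN₂n v hvN₂ u hu hne
    exact h23 (keyj l₂ N₂ hl₂ hN₂ hle)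
  -- the point v * w is not on l₁
  have hpl₁ : ¬ I (v * w) l₁ := by
    intro hIp
    have hpN₁ : (v * w) ∈ N₁ := (hN₁ _).mp hIp
    have hDp : (v * w) * ti ≠ ti * (v * w) := by
      intro heq
      apply hvti
      exact lem 1 v w ti (by simp) (hwTi ti hti) (by simpa [mul_assoc] using heq)
    have hle : T i ≤ N₁ :=
      aux_Ti_le (T i) (hTnorm i) (hTsimple i) N₁ hN₁n (v * w) hpN₁ ti hti hDp
    exact h12 (keyi l₁ N₁ hl₁ hN₁ hle)
  -- apply the GQ axiom
  obtain ⟨⟨q, n⟩, ⟨hpn, hqn, hql₁⟩, -⟩ := hGQ (v * w) l₁ hpl₁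
  have hqN₁ : q ∈ N₁ := (hN₁ q).mp hql₁
  have hqTi : ∀ u ∈ T i, q * u = u * q := by
    intro u hu
    by_contra hne
    have hle : T i ≤ N₁ := aux_Ti_le (T i) (hTnorm i) (hTsimple i) N₁ hN₁n q hqN₁ u hu hne
    exact h12 (keyi l₁ N₁ hl₁ hN₁ hle)
  have hqTj : ∀ u ∈ T j, q * u = u * q := by
    intro u hu
    by_contra hne
    have hle : T j ≤ N₁ := aux_Ti_le (T j) (hTnorm j) (hTsimple j) N₁ hN₁n q hqN₁ u hu hne
    exact h13 (keyj l₁ N₁ hl₁ hN₁ hle)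
  -- translate n to a line through 1
  have h1n' : I (1 : M) ((ρ q⁻¹) • n) := by
    have h0 := (hcol (ρ q⁻¹) q n).mp hqn
    rwa [hρ, mul_inv_cancel] at h0
  have hzn' : I (v * w * q⁻¹) ((ρ q⁻¹) • n) := by
    have h0 := (hcol (ρ q⁻¹) (v * w) n).mp hpn
    rwa [hρ] at h0
  obtain ⟨N, hNn, hN⟩ := lineSub _ h1n'
  have hzN : v * w * q⁻¹ ∈ N := (hN _).mp hzn'
  -- z = v*w*q⁻¹ fails to centralise both T i and T j
  have cq_i : Commute q ti := hqTi ti hti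
  have cq_j : Commute q tj := hqTj tj htj
  have cqi : q⁻¹ * ti = ti * q⁻¹ := cq_i.inv_left
  have cqj : q⁻¹ * tj = tj * q⁻¹ := cq_j.inv_left
  have hDzi : (v * w * q⁻¹) * ti ≠ ti * (v * w * q⁻¹) := by
    intro heq
    apply hvti
    have cw_i : Commute w ti := hwTi ti hti
    have hwq : (w * q⁻¹) * ti = ti * (w * q⁻¹) := cw_i.mul_left cq_i.inv_left
    exact lem 1 v (w * q⁻¹) ti (by simp) hwq (by simpa [mul_assoc] using heq)
  have hDzj : (v * w * q⁻¹) * tj ≠ tj * (v * w * q⁻¹) := by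
    intro heq
    apply hwtj
    exact lem v w q⁻¹ tj (hvTj tj htj) cqj heq
  have hTiN : T i ≤ N :=
    aux_Ti_le (T i) (hTnorm i) (hTsimple i) N hNn (v * w * q⁻¹) hzN ti hti hDzi
  have hTjN : T j ≤ N :=
    aux_Ti_le (T j) (hTnorm j) (hTsimple j) N hNn (v * w * q⁻¹) hzN tj htj hDzj
  have e2 : (ρ q⁻¹) • n = l₂ := keyi _ N h1n' hN hTiN
  have e3 : (ρ q⁻¹) • n = l₃ := keyj _ N h1n' hN hTjN
  exact h23 (e2 ▸ e3)
end

section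
/- Let (P, L, I) be a finite thick generalised quadrangle of order (s,t), and let G be a collineation group of (P, L, I) that acts transitively on L and has a normal subgroup M acting regularly on P with M ⋊ Inn(M) ≤ G; identify P with M. Suppose M is the internal direct product of subgroups T₁, …, T_k with k ≥ 3, where the T_i are pairwise isomorphic non-Abelian finite simple groups, and suppose the conjugation action of G on M permutes the set {T₁, …, T_k} transitively. Let ℓ be a line incident with the identity 1 ∈ M, identified with its point set, which is a subgroup of M. Then ℓ is isomorphic to a subgroup of T₁; more precisely, there is an index i such that the projection homomorphism M → T_i (coming from the direct product decomposition) restricts to an injective homomorphism on ℓ. -/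
private theorem exists_projections {M : Type*} [Group M] {k : ℕ} {T : Fin k → Subgroup M}
    (hTnorm : ∀ i, (T i).Normal) (hTindep : iSupIndep T) (hTsup : ⨆ i, T i = ⊤) :
    ∃ φ : ∀ i, M →* T i,
      (∀ (i : Fin k) (x : M) (hx : x ∈ T i), φ i x = ⟨x, hx⟩) ∧
      (∀ (i j : Fin k), j ≠ i → ∀ x ∈ T j, φ i x = 1) ∧
      (∀ x y : M, (∀ i, φ i x = φ i y) → x = y) := by
  classical
  have hcomm : Pairwise fun i j : Fin k => ∀ x y : M, x ∈ T i → y ∈ T j → Commute x y := by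
    intro i j hij x y hx hy
    exact Subgroup.commute_of_normal_of_disjoint _ _ (hTnorm i) (hTnorm j)
      (hTindep.pairwiseDisjoint hij) x y hx hy
  have hinj : Function.Injective (Subgroup.noncommPiCoprod hcomm) :=
    Subgroup.injective_noncommPiCoprod_of_iSupIndep hTindep
  have hsurj : Function.Surjective (Subgroup.noncommPiCoprod hcomm) := by
    rw [← MonoidHom.range_eq_top, Subgroup.noncommPiCoprod_range]
    exact hTsup
  let e : (∀ i, T i) ≃* M := MulEquiv.ofBijective _ ⟨hinj, hsurj⟩
  have hsingle : ∀ (i : Fin k) (x : M) (hx : x ∈ T i), e.symm x = Pi.mulSingle i ⟨x, hx⟩ := by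
    intro i x hx
    apply e.injective
    rw [MulEquiv.apply_symm_apply]
    exact (Subgroup.noncommPiCoprod_mulSingle (hcomm := hcomm) i ⟨x, hx⟩).symm
  refine ⟨fun i => (Pi.evalMonoidHom (fun i => T i) i).comp e.symm.toMonoidHom, ?_, ?_, ?_⟩
  · intro i x hx
    show (e.symm x) i = _
    rw [hsingle i x hx, Pi.mulSingle_eq_same]
  · intro i j hij x hx
    show (e.symm x) i = 1
    rw [hsingle j x hx]
    exact Pi.mulSingle_eq_of_ne (Ne.symm hij) _
  · intro x y h
    have : e.symm x = e.symm y := funext h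
    have := congrArg e this
    rwa [MulEquiv.apply_symm_apply, MulEquiv.apply_symm_apply] at this

/-- Claim 4.2: In the HC setting with `k ≥ 3` factors, a line `l` through
`1` (whose point set is a subgroup of `M`) is isomorphic to a subgroup of `T₁`: some
projection `M → Tᵢ` of the direct decomposition is injective on `l`. -/
theorem stmt_13 {M L G : Type*} [Group M] [Fintype M] [Fintype L]
    [Group G] [MulAction G M] [MulAction G L]
    (I : M → L → Prop) (s t : ℕ) (hs : 2 ≤ s) (ht : 2 ≤ t)
    -- any two distinct points are incident with at most one common line
    (hpls : ∀ p q : M, p ≠ q → ∀ l l' : L, I p l → I q l → I p l' → I q l' → l = l')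
    -- every line is incident with exactly s+1 points
    (hline : ∀ l : L, {p : M | I p l}.ncard = s + 1)
    -- every point is incident with exactly t+1 lines
    (hpoint : ∀ p : M, {l : L | I p l}.ncard = t + 1)
    -- the generalised quadrangle axiom
    (hGQ : ∀ (p : M) (l : L), ¬ I p l →
      ∃! qm : M × L, I p qm.2 ∧ I qm.1 qm.2 ∧ I qm.1 l)
    -- G acts by collineations
    (hcol : ∀ (g : G) (p : M) (l : L), I p l ↔ I (g • p) (g • l))
    -- G is transitive on lines
    (htL : ∀ l l' : L, ∃ g : G, g • l = l')
    -- M is (the image of) a normal subgroup of G acting on points by right multiplication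
    (ρ : M →* G) (hρ : ∀ m x : M, (ρ m) • x = x * m)
    (hnorm : ρ.range.Normal)
    -- every left translation of M is induced by an element of G
    (hleft : ∀ m : M, ∃ g : G, ∀ x : M, g • x = m⁻¹ * x)
    -- M is the internal direct product of k ≥ 3 pairwise isomorphic
    -- non-Abelian finite simple subgroups T₁, ..., T_k
    (k : ℕ) (hk : 3 ≤ k) (T : Fin k → Subgroup M)
    (hTnorm : ∀ i, (T i).Normal)
    (hTindep : iSupIndep T)
    (hTsup : ⨆ i, T i = ⊤)
    (hTsimple : ∀ i, IsSimpleGroup (T i))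
    (hTnab : ∀ i, ∃ a b : (T i), a * b ≠ b * a)
    (hTiso : ∀ i j, Nonempty ((T i) ≃* (T j)))
    -- the conjugation action of G on M permutes {T₁, ..., T_k} ...
    (hperm : ∀ g : G, ∃ σ : M ≃* M, (∀ x : M, g * ρ x * g⁻¹ = ρ (σ x)) ∧
      ∀ i, ∃ j, (T i).map σ.toMonoidHom = T j)
    -- ... transitively
    (htrans : ∀ i j, ∃ (g : G) (σ : M ≃* M), (∀ x : M, g * ρ x * g⁻¹ = ρ (σ x)) ∧
      (T i).map σ.toMonoidHom = T j)
    -- l is a line through 1 whose point set is a subgroup of M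
    (l : L) (h1 : I (1 : M) l)
    (Hl : Subgroup M) (hHl : {x : M | I x l} = (Hl : Set M)) :
    ∃ i : Fin k, ∃ φ : M →* (T i),
      (∀ x : M, ∀ hx : x ∈ T i, φ x = ⟨x, hx⟩) ∧
      (∀ j : Fin k, j ≠ i → ∀ x : M, x ∈ T j → φ x = 1) ∧
      Set.InjOn φ {x : M | I x l} := by
  classical
  obtain ⟨φ, hF1, hF2, hF3⟩ := exists_projections hTnorm hTindep hTsup
  -- membership in Hl vs incidence with l
  have memS : ∀ x : M, I x l ↔ x ∈ Hl := by
    intro x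
    have := Set.ext_iff.mp hHl x
    simpa using this
  have h1mem : (1 : M) ∈ Hl := (memS 1).mp h1
  -- the component maps detect equality to 1
  have hF3' : ∀ x : M, (∀ i, φ i x = 1) → x = 1 := by
    intro x h
    exact hF3 x 1 (fun i => by rw [h i, map_one])
  -- elements with only the i-th component live in T i
  have hF5 : ∀ (i : Fin k) (x : M), (∀ j, j ≠ i → φ j x = 1) → x ∈ T i := by
    intro i x h
    have hx : x = ((φ i x : T i) : M) := by
      apply hF3
      intro j
      by_cases hj : j = i
      · subst hj
        rw [hF1 j _ (φ j x).2]
      · rw [h j hj, hF2 j i (fun hij => hj hij.symm) _ (φ i x).2]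
    rw [hx]; exact (φ i x).2
  -- two distinct points on every line
  have exists_pair_line : ∀ m : L, ∃ x y : M, I x m ∧ I y m ∧ x ≠ y := by
    intro m
    have hcard : 1 < {p : M | I p m}.ncard := by
      rw [hline m]; omega
    obtain ⟨a, b, ha, hb, hne⟩ := (Set.one_lt_ncard_iff (Set.toFinite _)).mp hcard
    exact ⟨a, b, ha, hb, hne⟩
  -- a nontrivial element of Hl
  have ha0 : ∃ a : M, a ∈ Hl ∧ a ≠ 1 := by
    obtain ⟨x, y, hxm, hym, hxy⟩ := exists_pair_line l
    by_cases hx1 : x = 1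
    · exact ⟨y, (memS y).mp hym, by rw [← hx1]; exact hxy.symm⟩
    · exact ⟨x, (memS x).mp hxm, hx1⟩
  -- conjugations are induced by G
  have hconj : ∀ w : M, ∃ g : G, ∀ x : M, g • x = w⁻¹ * x * w := by
    intro w
    obtain ⟨h, hh⟩ := hleft w
    refine ⟨h * ρ w, fun x => ?_⟩
    rw [mul_smul, hρ, hh, mul_assoc]
  -- nontrivial elements of each T i
  have hTnontriv : ∀ i : Fin k, ∃ u : M, u ∈ T i ∧ u ≠ 1 := by
    intro i
    obtain ⟨u, v, huv⟩ := hTnab i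
    by_cases hu : u = 1
    · exfalso; apply huv; rw [hu, one_mul, mul_one]
    · refine ⟨(u : M), u.2, fun h => hu ?_⟩
      exact Subtype.ext h
  -- elements commuting with all of T i have trivial i-th component
  have centerTriv : ∀ (i : Fin k) (x : M), (∀ u ∈ T i, x * u = u * x) → φ i x = 1 := by
    intro i x hx
    haveI := hTsimple i
    have hc : φ i x ∈ Subgroup.center (T i) := by
      rw [Subgroup.mem_center_iff]
      intro g
      have h0 : x * (g : M) = (g : M) * x := hx g g.2
      have h2 : φ i (x * (g : M)) = φ i ((g : M) * x) := by rw [h0]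
      rw [map_mul, map_mul, hF1 i _ g.2] at h2
      have hg : (⟨(g : M), g.2⟩ : T i) = g := rfl
      rw [hg] at h2
      exact h2.symm
    have hZnormal : (Subgroup.center (T i)).Normal := by
      constructor
      intro n hn g
      have he : g * n * g⁻¹ = n := by
        rw [Subgroup.mem_center_iff] at hn
        rw [hn g]
        simp
      rw [he]; exact hn
    rcases hZnormal.eq_bot_or_eq_top with hbot | htop
    · rw [hbot] at hc
      simpa using hc
    · exfalso
      obtain ⟨u, v, huv⟩ := hTnab i
      apply huv
      have : u ∈ Subgroup.center (T i) := by rw [htop]; trivial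
      exact (Subgroup.mem_center_iff.mp this v).symm
  -- a normal subgroup with nontrivial i-th projection of some element contains T i
  have LCom : ∀ (N : Subgroup M), N.Normal → ∀ x ∈ N, ∀ i : Fin k, φ i x ≠ 1 → T i ≤ N := by
    intro N hN x hx i hφ
    haveI := hTsimple i
    have hnc : ¬ ∀ u ∈ T i, ((φ i x : M)) * u = u * (φ i x : M) := by
      intro hall
      apply hφ
      have h' := centerTriv i ((φ i x : M)) hall
      rw [hF1 i _ (φ i x).2] at h'
      have h'' := congrArg Subtype.val h'
      exact Subtype.ext (by simpa using h'')
    push_neg at hnc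
    obtain ⟨tt, htT, hcomm'⟩ := hnc
    set y : M := x⁻¹ * (tt⁻¹ * x * tt) with hy
    have hyN : y ∈ N := by
      apply N.mul_mem (N.inv_mem hx)
      have h6 := hN.conj_mem x hx tt⁻¹
      rw [inv_inv] at h6
      exact h6
    have hyTj : ∀ j, j ≠ i → φ j y = 1 := by
      intro j hj
      have h1 : φ j tt = 1 := hF2 j i (fun h => hj h.symm) tt htT
      rw [hy]
      rw [map_mul, map_mul, map_mul, map_inv, map_inv, h1]
      simp
    have hyTi : y ∈ T i := hF5 i y hyTj
    have hyne : y ≠ 1 := by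
      intro h
      apply hcomm'
      have h2 : φ i y = 1 := by rw [h, map_one]
      rw [hy, map_mul, map_mul, map_mul, map_inv, map_inv, hF1 i tt htT] at h2
      set a := φ i x
      set τ : T i := ⟨tt, htT⟩
      have h3 : τ⁻¹ * a * τ = a := by
        have := congrArg (fun z => a * z) h2
        simpa [mul_assoc] using this
      have h4 : a * τ = τ * a := by
        have := congrArg (fun z => τ * z) h3
        simpa [mul_assoc] using this
      have := congrArg (Subtype.val) h4
      simpa using this
    have hsub : N.subgroupOf (T i) = ⊤ := by
      rcases (hN.subgroupOf (T i)).eq_bot_or_eq_top with hbot | htop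
      · exfalso
        have : (⟨y, hyTi⟩ : T i) ∈ N.subgroupOf (T i) := by
          rw [Subgroup.mem_subgroupOf]; exact hyN
        rw [hbot] at this
        apply hyne
        simpa [Subtype.ext_iff] using this
      · exact htop
    exact Subgroup.subgroupOf_eq_top.mp hsub
  -- a collineation induced by conjugation fixing two points of a line fixes the line
  have fixline : ∀ (gw : G) (w : M), (∀ z : M, gw • z = w⁻¹ * z * w) →
      ∀ (m : L) (x y : M), x ≠ y → I x m → I y m →
      w⁻¹ * x * w = x → w⁻¹ * y * w = y → gw • m = m := by
    intro gw w hgw m x y hne hxm hym hwx hwy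
    have hx' : I x (gw • m) := by
      have := (hcol gw x m).mp hxm
      rwa [hgw, hwx] at this
    have hy' : I y (gw • m) := by
      have := (hcol gw y m).mp hym
      rwa [hgw, hwy] at this
    exact hpls x y hne (gw • m) m hx' hy' hxm hym
  -- reduce to finding an injective component on Hl
  suffices hinj : ∃ i : Fin k, ∀ x ∈ Hl, φ i x = 1 → x = 1 by
    obtain ⟨i, hi⟩ := hinj
    refine ⟨i, φ i, hF1 i, fun j hj x hx => hF2 i j hj x hx, ?_⟩
    intro x hx y hy hxy
    have hx' : x ∈ Hl := (memS x).mp hx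
    have hy' : y ∈ Hl := (memS y).mp hy
    have h0 : φ i (x⁻¹ * y) = 1 := by
      rw [map_mul, map_inv, hxy]
      simp
    have h2 := hi _ (Hl.mul_mem (Hl.inv_mem hx') hy') h0
    have h3 := congrArg (fun z => x * z) h2
    simpa using h3.symm
  by_contra hcon
  push_neg at hcon
  -- hcon : ∀ i, ∃ x ∈ Hl, φ i x = 1 ∧ x ≠ 1
  -- Step N : Hl is normal in M
  have hHlnormal : Hl.Normal := by
    rw [← Subgroup.normalizer_eq_top_iff, eq_top_iff, ← hTsup]
    apply iSup_le
    intro i w hw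
    obtain ⟨a, haH, haφ, hane⟩ := hcon i
    -- a commutes with w
    have hcomm_a : w⁻¹ * a * w = a := by
      apply hF3
      intro j
      by_cases hj : j = i
      · subst hj
        rw [map_mul, map_mul, map_inv, haφ]
        simp
      · have hw0 : φ j w = 1 := hF2 j i (fun h => hj h.symm) w hw
        rw [map_mul, map_mul, map_inv, hw0]
        simp
    obtain ⟨gw, hgw⟩ := hconj w
    have hfix : gw • l = l :=
      fixline gw w hgw l 1 a (Ne.symm hane) h1 ((memS a).mpr haH)
        (by simp) hcomm_a
    rw [Subgroup.mem_normalizer_iff]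
    intro h
    have key : ∀ z : M, I z l ↔ I (w⁻¹ * z * w) l := by
      intro z
      rw [hcol gw z l, hgw z, hfix]
    constructor
    · intro hh
      have h7 : w⁻¹ * (w * h * w⁻¹) * w = h := by group
      have := (key (w * h * w⁻¹)).mpr (by rw [h7]; exact (memS h).mpr hh)
      exact (memS _).mp this
    · intro hh
      have h7 : w⁻¹ * (w * h * w⁻¹) * w = h := by group
      have := (key (w * h * w⁻¹)).mp ((memS _).mpr hh)
      rw [h7] at this
      exact (memS h).mp this
  -- components of elements of Hl vanish outside the support of Hl
  have HlProj : ∀ j : Fin k, ¬ (T j ≤ Hl) → ∀ x ∈ Hl, φ j x = 1 := by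
    intro j hj x hx
    by_contra hne
    exact hj (LCom Hl hHlnormal x hx j hne)
  -- some factor is contained in Hl
  obtain ⟨a0, ha0H, ha0ne⟩ := ha0
  have hex0 : ∃ i, φ i a0 ≠ 1 := by
    by_contra hall
    push_neg at hall
    exact ha0ne (hF3' a0 hall)
  obtain ⟨i₀, hi₀⟩ := hex0
  have hJi₀ : T i₀ ≤ Hl := LCom Hl hHlnormal a0 ha0H i₀ hi₀
  -- Hl is not everything
  have hHlneTop : Hl ≠ ⊤ := by
    intro htop
    have h2 : ∃ m : L, I 1 m ∧ m ≠ l := by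
      have hcard : 1 < {m : L | I (1:M) m}.ncard := by rw [hpoint 1]; omega
      obtain ⟨m1, m2, hm1, hm2, hne⟩ := (Set.one_lt_ncard_iff (Set.toFinite _)).mp hcard
      rcases eq_or_ne m1 l with h | h
      · exact ⟨m2, hm2, by rw [← h]; exact hne.symm⟩
      · exact ⟨m1, hm1, h⟩
    obtain ⟨m, h1m, hml⟩ := h2
    obtain ⟨x, y, hxm, hym, hxy⟩ := exists_pair_line m
    apply hml
    refine hpls x y hxy m l hxm hym ((memS x).mpr ?_) ((memS y).mpr ?_)
    · rw [htop]; trivial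
    · rw [htop]; trivial
  -- some factor is not contained in Hl
  have hexj : ∃ j, ¬ T j ≤ Hl := by
    by_contra hall
    push_neg at hall
    apply hHlneTop
    rw [eq_top_iff, ← hTsup]
    exact iSup_le hall
  obtain ⟨jstar, hjstar⟩ := hexj
  -- images of the line l under automorphisms carrying T i₀ to T j
  have lineimg : ∀ j : Fin k, ∃ (σ : M ≃* M) (lB : L),
      (T i₀).map σ.toMonoidHom = T j ∧
      (∀ x : M, I x lB ↔ x ∈ Hl.map σ.toMonoidHom) := by
    intro j
    obtain ⟨g, σ, hgσ, hmap⟩ := htrans i₀ j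
    obtain ⟨h, hh⟩ := hleft (g • (1:M))
    refine ⟨σ, h • (g • l), hmap, ?_⟩
    have hgy : ∀ y : M, g • y = (g • (1:M)) * σ y := by
      intro y
      have h1' : g • y = g • (ρ y • 1) := by rw [hρ y 1, one_mul]
      have h2' : g * ρ y = ρ (σ y) * g := by
        have := hgσ y
        rw [← this]
        group
      rw [h1', ← mul_smul, h2', mul_smul, hρ]
    have key3 : ∀ z : M, I z l ↔ I (σ z) (h • (g • l)) := by
      intro z
      rw [hcol g z l, hgy z, hcol h ((g • (1:M)) * σ z) (g • l), hh]
      rw [inv_mul_cancel_left]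
    intro x
    constructor
    · intro hx
      have h8 := key3 (σ.symm x)
      rw [MulEquiv.apply_symm_apply] at h8
      exact ⟨σ.symm x, (memS _).mp (h8.mpr hx), by simp⟩
    · rintro ⟨y, hy, rfl⟩
      exact (key3 y).mp ((memS y).mpr hy)
  obtain ⟨σB, lB, hmapB, hptB⟩ := lineimg jstar
  set B : Subgroup M := Hl.map σB.toMonoidHom with hBdef
  have hBnormal : B.Normal := hHlnormal.map σB.toMonoidHom σB.surjective
  have h1B : (1 : M) ∈ B := B.one_mem
  have hlBl : lB ≠ l := by
    intro he
    apply hjstar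
    have hBH : B = Hl := by
      ext x
      rw [← hptB x, he, memS x]
    calc T jstar = (T i₀).map σB.toMonoidHom := hmapB.symm
      _ ≤ Hl.map σB.toMonoidHom := Subgroup.map_mono hJi₀
      _ = Hl := hBH
  have hABtriv : ∀ x : M, x ∈ Hl → x ∈ B → x = 1 := by
    intro x hxA hxB
    by_contra hne
    exact hlBl (hpls x 1 hne lB l ((hptB x).mpr hxB) ((hptB 1).mpr h1B)
      ((memS x).mpr hxA) h1)
  have hABcomm : ∀ a ∈ Hl, ∀ b ∈ B, a * b = b * a := by
    intro a ha b hb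
    exact Subgroup.commute_of_normal_of_disjoint Hl B hHlnormal hBnormal
      (Subgroup.disjoint_def.mpr fun hx hy => hABtriv _ hx hy) a b ha hb
  -- triangle lemma: products of nontrivial elements of Hl and B are not collinear with 1
  have TRI : ∀ (a b : M) (m : L), a ∈ Hl → b ∈ B → a ≠ 1 → b ≠ 1 →
      I (a * b) m → I (1:M) m → False := by
    intro a b m haH hbB hane hbne habm h1m
    have hnotl : ¬ I (a * b) l := by
      intro hI
      have hab : a * b ∈ Hl := (memS _).mp hI
      have hb' : b ∈ Hl := by
        have := Hl.mul_mem (Hl.inv_mem haH) hab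
        rwa [inv_mul_cancel_left] at this
      exact hbne (hABtriv b hb' hbB)
    obtain ⟨⟨q, n⟩, _, huniq⟩ := hGQ (a * b) l hnotl
    have s1a : I (a * b) (ρ a • lB) := by
      have hbb : I b lB := (hptB b).mpr hbB
      have := (hcol (ρ a) b lB).mp hbb
      rw [hρ] at this
      rwa [← hABcomm a haH b hbB] at this
    have s1b : I a (ρ a • lB) := by
      have h0 : I (1:M) lB := (hptB 1).mpr h1B
      have := (hcol (ρ a) 1 lB).mp h0
      rwa [hρ, one_mul] at this
    have e1 := huniq (a, ρ a • lB) ⟨s1a, s1b, (memS a).mpr haH⟩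
    have e2 := huniq (1, m) ⟨habm, h1m, h1⟩
    apply hane
    have := e1.trans e2.symm
    exact congrArg Prod.fst this
  by_cases hcase : ∀ i : Fin k, T i ≤ Hl ∨ T i ≤ B
  · -- every point decomposes as a product of a point of Hl and a point of B
    have hdecomp : ∀ x : M, ∃ a ∈ Hl, ∃ b ∈ B, x = a * b := by
      let K : Subgroup M :=
        { carrier := {x : M | ∃ a ∈ Hl, ∃ b ∈ B, x = a * b}
          one_mem' := ⟨1, Hl.one_mem, 1, B.one_mem, by simp⟩
          mul_mem' := by
            rintro x y ⟨a, ha, b, hb, rfl⟩ ⟨a', ha', b', hb', rfl⟩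
            refine ⟨a * a', Hl.mul_mem ha ha', b * b', B.mul_mem hb hb', ?_⟩
            have hcomm' : b * a' = a' * b := (hABcomm a' ha' b hb).symm
            calc a * b * (a' * b') = a * (b * a') * b' := by group
              _ = a * (a' * b) * b' := by rw [hcomm']
              _ = a * a' * (b * b') := by group
          inv_mem' := by
            rintro x ⟨a, ha, b, hb, rfl⟩
            refine ⟨a⁻¹, Hl.inv_mem ha, b⁻¹, B.inv_mem hb, ?_⟩
            rw [mul_inv_rev]
            exact (hABcomm a⁻¹ (Hl.inv_mem ha) b⁻¹ (B.inv_mem hb)).symm }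
      have htop : (⊤ : Subgroup M) ≤ K := by
        rw [← hTsup]
        apply iSup_le
        intro i
        rcases hcase i with h | h
        · intro x hx
          exact ⟨x, h hx, 1, B.one_mem, by simp⟩
        · intro x hx
          exact ⟨1, Hl.one_mem, x, h hx, by simp⟩
      intro x
      exact htop (Subgroup.mem_top x)
    -- a third line through 1
    have h3 : ∃ m : L, I (1:M) m ∧ m ≠ l ∧ m ≠ lB := by
      by_contra hno
      push_neg at hno
      have hsub : {m : L | I (1:M) m} ⊆ {l, lB} := by
        intro m hm
        rcases eq_or_ne m l with h | h
        · exact Or.inl h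
        · exact Or.inr (hno m hm h)
      have hle := Set.ncard_le_ncard hsub (Set.toFinite _)
      rw [hpoint 1] at hle
      have : ({l, lB} : Set L).ncard ≤ 2 := by
        refine le_trans (Set.ncard_insert_le _ _) ?_
        rw [Set.ncard_singleton]
      omega
    obtain ⟨m, h1m, hml, hmlB⟩ := h3
    have hsubm : ∀ x : M, I x m → x ∈ Hl ∨ x ∈ B := by
      intro x hxm
      obtain ⟨a, haH, b, hbB, rfl⟩ := hdecomp x
      by_cases haone : a = 1
      · right; rw [haone, one_mul]; exact hbB
      by_cases hbone : b = 1
      · left; rw [hbone, mul_one]; exact haH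
      exact absurd (TRI a b m haH hbB haone hbone hxm h1m) (fun h => h)
    have hpair : ∃ x y : M, x ≠ y ∧ I x m ∧ I y m ∧
        ((x ∈ Hl ∧ y ∈ Hl) ∨ (x ∈ B ∧ y ∈ B)) := by
      by_contra hno
      have hA1 : ({x : M | I x m} ∩ (Hl : Set M)).ncard ≤ 1 := by
        rw [Set.ncard_le_one (Set.toFinite _)]
        intro x hx y hy
        by_contra hxy
        exact hno ⟨x, y, hxy, hx.1, hy.1, Or.inl ⟨hx.2, hy.2⟩⟩
      have hB1 : ({x : M | I x m} ∩ (B : Set M)).ncard ≤ 1 := by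
        rw [Set.ncard_le_one (Set.toFinite _)]
        intro x hx y hy
        by_contra hxy
        exact hno ⟨x, y, hxy, hx.1, hy.1, Or.inr ⟨hx.2, hy.2⟩⟩
      have hsub2 : {x : M | I x m} ⊆
          ({x : M | I x m} ∩ (Hl : Set M)) ∪ ({x : M | I x m} ∩ (B : Set M)) := by
        intro x hx
        rcases hsubm x hx with h | h
        · exact Or.inl ⟨hx, h⟩
        · exact Or.inr ⟨hx, h⟩
      have hle := Set.ncard_le_ncard hsub2 (Set.toFinite _)
      have hle2 := Set.ncard_union_le ({x : M | I x m} ∩ (Hl : Set M))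
        ({x : M | I x m} ∩ (B : Set M))
      rw [hline m] at hle
      omega
    obtain ⟨x, y, hxy, hxm, hym, hcase2⟩ := hpair
    rcases hcase2 with ⟨hxA, hyA⟩ | ⟨hxB, hyB⟩
    · exact hml (hpls x y hxy m l hxm hym ((memS x).mpr hxA) ((memS y).mpr hyA))
    · exact hmlB (hpls x y hxy m lB hxm hym ((hptB x).mpr hxB) ((hptB y).mpr hyB))
  · push_neg at hcase
    obtain ⟨ish, hishA, hishB⟩ := hcase
    obtain ⟨σC, lC, hmapC, hptC⟩ := lineimg ish
    set C : Subgroup M := Hl.map σC.toMonoidHom with hCdef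
    have hCnormal : C.Normal := hHlnormal.map σC.toMonoidHom σC.surjective
    have h1C : (1 : M) ∈ C := C.one_mem
    have hTishC : T ish ≤ C := by
      calc T ish = (T i₀).map σC.toMonoidHom := hmapC.symm
        _ ≤ Hl.map σC.toMonoidHom := Subgroup.map_mono hJi₀
    have hlCl : lC ≠ l := by
      intro he
      apply hishA
      have hCH : C = Hl := by
        ext x
        rw [← hptC x, he, memS x]
      rw [← hCH]
      exact hTishC
    have hlClB : lC ≠ lB := by
      intro he
      apply hishB
      have hCB : C = B := by
        ext x
        rw [← hptC x, he, hptB x]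
      rw [← hCB]
      exact hTishC
    have hACtriv : ∀ x : M, x ∈ Hl → x ∈ C → x = 1 := by
      intro x hxA hxC
      by_contra hne
      exact hlCl (hpls x 1 hne lC l ((hptC x).mpr hxC) ((hptC 1).mpr h1C)
        ((memS x).mpr hxA) h1)
    have hBCtriv : ∀ x : M, x ∈ B → x ∈ C → x = 1 := by
      intro x hxB hxC
      by_contra hne
      exact hlClB (hpls x 1 hne lC lB ((hptC x).mpr hxC) ((hptC 1).mpr h1C)
        ((hptB x).mpr hxB) ((hptB 1).mpr h1B))
    have hACcomm : ∀ a ∈ Hl, ∀ c ∈ C, a * c = c * a := by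
      intro a ha c hc
      exact Subgroup.commute_of_normal_of_disjoint Hl C hHlnormal hCnormal
        (Subgroup.disjoint_def.mpr fun hx hy => hACtriv _ hx hy) a c ha hc
    have hBCcomm : ∀ b ∈ B, ∀ c ∈ C, b * c = c * b := by
      intro b hb c hc
      exact Subgroup.commute_of_normal_of_disjoint B C hBnormal hCnormal
        (Subgroup.disjoint_def.mpr fun hx hy => hBCtriv _ hx hy) b c hb hc
    -- the point p = a * b
    obtain ⟨a, haT, hane⟩ := hTnontriv i₀
    have haH : a ∈ Hl := hJi₀ haT
    set b : M := σB a with hbdef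
    have hbB : b ∈ B := ⟨a, haH, rfl⟩
    have hbT : b ∈ T jstar := by
      rw [← hmapB]
      exact ⟨a, haT, rfl⟩
    have hbne : b ≠ 1 := by
      intro h
      apply hane
      apply σB.injective
      rw [map_one, ← hbdef]
      exact h
    have hji₀ : jstar ≠ i₀ := by
      intro h
      exact hjstar (h ▸ hJi₀)
    set p : M := a * b with hpdef
    have hpnotC : ¬ I p lC := by
      intro hI
      have hpC : p ∈ C := (hptC p).mp hI
      have hz : φ i₀ p = 1 := by
        apply centerTriv i₀ p
        intro u hu
        exact (hACcomm u (hJi₀ hu) p hpC).symm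
      have hb0 : φ i₀ b = 1 := hF2 i₀ jstar hji₀ b hbT
      have hp0 : φ i₀ p = ⟨a, haT⟩ := by
        rw [hpdef, map_mul, hb0, mul_one, hF1 i₀ a haT]
      rw [hp0] at hz
      exact hane (by simpa [Subtype.ext_iff] using hz)
    obtain ⟨⟨q, n⟩, ⟨hpn, hqn, hqlC⟩, huniq⟩ := hGQ p lC hpnotC
    have hqC : q ∈ C := (hptC q).mp hqlC
    have hqne : q ≠ 1 := by
      intro h
      rw [h] at hqn
      exact TRI a b n haH hbB hane hbne hpn hqn
    -- a nontrivial element of C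
    obtain ⟨w0, hw0T, hw0ne⟩ := hTnontriv ish
    have hw0C : w0 ∈ C := hTishC hw0T
    -- conjugation by any element of C fixes q
    have hqcomm : ∀ w ∈ C, w⁻¹ * q * w = q := by
      intro w hwC
      obtain ⟨gw, hgw⟩ := hconj w
      -- gw fixes the line lC
      have hyC : w⁻¹ * w0 * w ∈ C := C.mul_mem (C.mul_mem (C.inv_mem hwC) hw0C) hwC
      have hyne : w⁻¹ * w0 * w ≠ 1 := by
        intro h
        apply hw0ne
        have := congrArg (fun z => w * z * w⁻¹) h
        simpa [mul_assoc] using this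
      have hI1 : I (1:M) (gw • lC) := by
        have := (hcol gw 1 lC).mp ((hptC 1).mpr h1C)
        rwa [hgw, mul_one, inv_mul_cancel] at this
      have hIy : I (w⁻¹ * w0 * w) (gw • lC) := by
        have := (hcol gw w0 lC).mp ((hptC w0).mpr hw0C)
        rwa [hgw] at this
      have hfixC : gw • lC = lC :=
        hpls (1:M) (w⁻¹ * w0 * w) (Ne.symm hyne) (gw • lC) lC hI1 hIy
          ((hptC 1).mpr h1C) ((hptC _).mpr hyC)
      -- gw fixes the point p
      have hwa : a * w = w * a := hACcomm a haH w hwC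
      have hwb : b * w = w * b := hBCcomm b hbB w hwC
      have hpfix : gw • p = p := by
        rw [hgw]
        calc w⁻¹ * (a * b) * w = w⁻¹ * a * (b * w) := by group
          _ = w⁻¹ * a * (w * b) := by rw [hwb]
          _ = w⁻¹ * (a * w) * b := by group
          _ = w⁻¹ * (w * a) * b := by rw [hwa]
          _ = a * b := by group
      -- a second solution of the GQ axiom
      have hs1 : I p (gw • n) := by
        have := (hcol gw p n).mp hpn
        rwa [hpfix] at this
      have hs2 : I (w⁻¹ * q * w) (gw • n) := by
        have := (hcol gw q n).mp hqn
        rwa [hgw] at this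
      have hs3 : I (w⁻¹ * q * w) lC :=
        (hptC _).mpr (C.mul_mem (C.mul_mem (C.inv_mem hwC) hqC) hwC)
      have := huniq (w⁻¹ * q * w, gw • n) ⟨hs1, hs2, hs3⟩
      exact congrArg Prod.fst this
    -- transport q back into Hl
    set q0 : M := σC.symm q with hq0def
    have hq0H : q0 ∈ Hl := by
      obtain ⟨y, hy, hyq⟩ := hqC
      have : q0 = y := by
        rw [hq0def, ← hyq]
        exact σC.symm_apply_apply y
      rw [this]
      exact hy
    have hq0ne : q0 ≠ 1 := by
      intro h
      apply hqne
      have := congrArg σC h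
      rwa [MulEquiv.apply_symm_apply, map_one] at this
    have hq0comm : ∀ y ∈ Hl, q0 * y = y * q0 := by
      intro y hy
      have hwC : σC y ∈ C := ⟨y, hy, rfl⟩
      have h9 := hqcomm (σC y) hwC
      have h10 : σC.symm ((σC y)⁻¹ * q * (σC y)) = σC.symm q := congrArg _ h9
      rw [map_mul, map_mul, map_inv, σC.symm_apply_apply] at h10
      -- h10 : y⁻¹ * q0 * y = q0
      calc q0 * y = y * (y⁻¹ * q0 * y) := by group
        _ = y * q0 := by rw [h10]
    apply hq0ne
    apply hF3'
    intro i
    by_cases hi : T i ≤ Hl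
    · exact centerTriv i q0 (fun u hu => hq0comm u (hi hu))
    · exact HlProj i hi q0 hq0H
end
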